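/- Let M = 2^(2λ) with λ ≥ 1 and let S be the square M-QAM signal set. Then every z ∈ ℂ with max(|Re z|, |Im z|) ≥ √M belongs to the clustering independent region Γ_CI(S). -/

import Mathlib

lemma my_abs_sub_le (a b : ℝ) : |a - b| ≤ |a| + |b| := by
  rw [sub_eq_add_neg]
  exact (abs_add_le a (-b)).trans (by rw [abs_neg])

lemma my_aux (t C E u v p q N : ℝ) (hu : |u| < 1) (hv : |v| < 1)
    (hp : |p| ≤ N - 1) (hq : |q| ≤ N - 1)
    (hC : |C| ≤ C^2) (hE : |E| ≤ E^2) (hpos : 0 < C^2 + E^2)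
    (hid : t * (C^2 + E^2) = C*u - E*v - (C*q - E*p)) : |t| < N := by
  have hN1 : 1 ≤ N := by linarith [abs_nonneg p]
  have hCE : 0 < |C| + |E| := by
    by_contra h
    push_neg at h
    have hC0 : C = 0 := abs_eq_zero.mp (le_antisymm (by linarith [abs_nonneg E]) (abs_nonneg C))
    have hE0 : E = 0 := abs_eq_zero.mp (le_antisymm (by linarith [abs_nonneg C]) (abs_nonneg E))
    rw [hC0, hE0] at hpos; norm_num at hpos
  have h1 : |t| * (C^2+E^2) ≤ |C| * |u| + |E| * |v| + (|C| * |q| + |E| * |p|) := by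
    have e1 : |t| * (C^2+E^2) = |t * (C^2+E^2)| := by rw [abs_mul, abs_of_pos hpos]
    rw [e1, hid]
    calc |C*u - E*v - (C*q - E*p)| ≤ |C*u - E*v| + |C*q - E*p| := my_abs_sub_le _ _
      _ ≤ (|C*u| + |E*v|) + (|C*q| + |E*p|) :=
          add_le_add (my_abs_sub_le _ _) (my_abs_sub_le _ _)
      _ = |C| * |u| + |E| * |v| + (|C| * |q| + |E| * |p|) := by
          rw [abs_mul, abs_mul, abs_mul, abs_mul]
  have hm : max |u| |v| < 1 := max_lt hu hv
  have h2 : |C| * |u| + |E| * |v| < |C| + |E| := by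
    have a1 : |C| * |u| ≤ |C| * max |u| |v| :=
      mul_le_mul_of_nonneg_left (le_max_left _ _) (abs_nonneg C)
    have a2 : |E| * |v| ≤ |E| * max |u| |v| :=
      mul_le_mul_of_nonneg_left (le_max_right _ _) (abs_nonneg E)
    nlinarith [mul_lt_mul_of_pos_left hm hCE]
  have h3 : |C| * |q| + |E| * |p| ≤ (|C|+|E|)*(N-1) := by
    have a1 : |C| * |q| ≤ |C| * (N-1) := mul_le_mul_of_nonneg_left hq (abs_nonneg C)
    have a2 : |E| * |p| ≤ |E| * (N-1) := mul_le_mul_of_nonneg_left hp (abs_nonneg E)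
    nlinarith
  have h4 : (|C|+|E|)*N ≤ (C^2+E^2)*N := by
    have : |C|+|E| ≤ C^2+E^2 := by linarith
    exact mul_le_mul_of_nonneg_right this (by linarith)
  have h5 : |t| * (C^2+E^2) < N * (C^2+E^2) := by nlinarith
  exact lt_of_mul_lt_mul_right h5 (le_of_lt hpos)

lemma my_key (z : ℂ) (A B C E N : ℝ)
    (hA : |A| ≤ N - 1) (hB : |B| ≤ N - 1)
    (hC : |C| ≤ C^2) (hE : |E| ≤ E^2) (hpos : 0 < C^2 + E^2)
    (hz : N ≤ max |z.re| |z.im|) :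
    1 ≤ ‖(↑A + ↑B * Complex.I) + z * (↑C + ↑E * Complex.I)‖ := by
  by_contra h
  push_neg at h
  set x := z.re with hx
  set y := z.im with hy
  have hre : ((↑A + ↑B * Complex.I) + z * (↑C + ↑E * Complex.I)).re = A + x*C - y*E := by
    simp [Complex.add_re, Complex.mul_re, Complex.add_im, Complex.mul_im]
    ring
  have him : ((↑A + ↑B * Complex.I) + z * (↑C + ↑E * Complex.I)).im = B + x*E + y*C := by
    simp [Complex.add_re, Complex.mul_re, Complex.add_im, Complex.mul_im]
    ring
  have hR : |A + x*C - y*E| < 1 := by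
    rw [← hre]; exact lt_of_le_of_lt (Complex.abs_re_le_norm _) h
  have hI : |B + x*E + y*C| < 1 := by
    rw [← him]; exact lt_of_le_of_lt (Complex.abs_im_le_norm _) h
  have hxN : |x| < N := by
    apply my_aux x C (-E) (A + x*C - y*E) (B + x*E + y*C) B A N hR hI hB hA hC
      (by rw [abs_neg]; calc |E| ≤ E^2 := hE
        _ = (-E)^2 := by ring) (by nlinarith)
    ring
  have hyN : |y| < N := by
    apply my_aux y C E (B + x*E + y*C) (A + x*C - y*E) A B N hI hR hA hB hC hE hpos
    ring
  exact absurd hz (not_le.mpr (max_lt hxN hyN))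

lemma my_int_abs_le_sq (c : ℤ) : |(c:ℝ)| ≤ (c:ℝ)^2 := by
  have h : |c| ≤ c^2 := by
    rcases eq_or_ne c 0 with rfl | hc
    · simp
    · have h1 : 1 ≤ |c| := Int.one_le_abs hc
      nlinarith [sq_abs c]
  exact_mod_cast h



/-- For square `M`-QAM (`M = 2^(2λ)`, `d_min(S) = 2`), every `z ∈ ℂ`
with `max(|Re z|, |Im z|) ≥ √M` belongs to the clustering independent region
`Γ_CI(S)`. -/
theorem qam_infty_norm_ge_sqrtM_clustering_independent (l : ℕ) (hl : 1 ≤ l)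
    (S : Finset ℂ)
    (hS : S = ((Finset.range (2 ^ l)) ×ˢ (Finset.range (2 ^ l))).image
      (fun p : ℕ × ℕ =>
        (2 * (p.1 : ℂ) - ((2 : ℂ) ^ l - 1)) + (2 * (p.2 : ℂ) - ((2 : ℂ) ^ l - 1)) * Complex.I))
    (ΔS : Finset ℂ)
    (hΔS : ΔS = (S ×ˢ S).image (fun p : ℂ × ℂ => p.1 - p.2))
    (Γ : Set ℂ)
    (hΓ : Γ = {z : ℂ | ∀ d ∈ ΔS, ∀ d' ∈ ΔS, ¬(d = 0 ∧ d' = 0) →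
      min 2 (‖z‖ * 2) ≤ ‖d + z * d'‖}) :
    ∀ z : ℂ, (2 : ℝ) ^ l ≤ max |z.re| |z.im| → z ∈ Γ := by
  have hKpos : (0:ℤ) < 2 ^ l := by positivity
  have repr : ∀ d ∈ ΔS, ∃ a b : ℤ, |a| ≤ 2^l - 1 ∧ |b| ≤ 2^l - 1 ∧
      d = 2*(a:ℂ) + 2*(b:ℂ)*Complex.I := by
    intro d hd
    rw [hΔS] at hd
    simp only [Finset.mem_image, Finset.mem_product] at hd
    obtain ⟨⟨s, t⟩, ⟨hs, ht⟩, rfl⟩ := hd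
    rw [hS] at hs ht
    simp only [Finset.mem_image, Finset.mem_product, Finset.mem_range] at hs ht
    obtain ⟨⟨p1, q1⟩, ⟨hp1, hq1⟩, rfl⟩ := hs
    obtain ⟨⟨p2, q2⟩, ⟨hp2, hq2⟩, rfl⟩ := ht
    refine ⟨(p1:ℤ) - p2, (q1:ℤ) - q2, ?_, ?_, ?_⟩
    · have h1 : (p1:ℤ) < 2^l := by exact_mod_cast hp1
      have h2 : (p2:ℤ) < 2^l := by exact_mod_cast hp2
      have h3 : (0:ℤ) ≤ p1 := Int.ofNat_nonneg p1
      have h4 : (0:ℤ) ≤ p2 := Int.ofNat_nonneg p2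
      rw [abs_le]; omega
    · have h1 : (q1:ℤ) < 2^l := by exact_mod_cast hq1
      have h2 : (q2:ℤ) < 2^l := by exact_mod_cast hq2
      have h3 : (0:ℤ) ≤ q1 := Int.ofNat_nonneg q1
      have h4 : (0:ℤ) ≤ q2 := Int.ofNat_nonneg q2
      rw [abs_le]; omega
    · push_cast
      ring
  intro z hz
  rw [hΓ]
  intro d hd d' hd' hne
  obtain ⟨a, b, ha, hb, rfl⟩ := repr d hd
  obtain ⟨c, e, hc, he, rfl⟩ := repr d' hd'
  by_cases hce : c = 0 ∧ e = 0
  · -- d' = 0, so d ≠ 0 and |d| ≥ 2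
    obtain ⟨rfl, rfl⟩ := hce
    have hd'0 : 2*((0:ℤ):ℂ) + 2*((0:ℤ):ℂ)*Complex.I = 0 := by push_cast; ring
    have hab : ¬(a = 0 ∧ b = 0) := by
      rintro ⟨rfl, rfl⟩
      exact hne ⟨by push_cast; ring, hd'0⟩
    have h1 : (1:ℤ) ≤ a^2 + b^2 := by
      rcases not_and_or.mp hab with h | h
      · nlinarith [Int.one_le_abs h, sq_abs a, sq_nonneg b]
      · nlinarith [Int.one_le_abs h, sq_abs b, sq_nonneg a]
    set dd : ℂ := 2*(a:ℂ) + 2*(b:ℂ)*Complex.I with hdd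
    have hre : dd.re = 2*(a:ℝ) := by simp [hdd]
    have him : dd.im = 2*(b:ℝ) := by simp [hdd]
    have hsq : ‖dd‖^2 = (2*(a:ℝ))^2 + (2*(b:ℝ))^2 := by
      rw [Complex.sq_norm, Complex.normSq_apply, hre, him]; ring
    have h1R : (1:ℝ) ≤ (a:ℝ)^2 + (b:ℝ)^2 := by exact_mod_cast h1
    have habs2 : 2 ≤ ‖dd‖ := by
      nlinarith [norm_nonneg dd]
    calc min 2 (‖z‖ * 2) ≤ 2 := min_le_left _ _
      _ ≤ ‖dd‖ := habs2
      _ = ‖dd + z * (2*((0:ℤ):ℂ) + 2*((0:ℤ):ℂ)*Complex.I)‖ := by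
          rw [hd'0]; ring_nf
  · -- d' ≠ 0
    have hposR : 0 < (c:ℝ)^2 + (e:ℝ)^2 := by
      rcases not_and_or.mp hce with h | h
      · have : (1:ℤ) ≤ c^2 := by nlinarith [Int.one_le_abs h, sq_abs c]
        have h1R : (1:ℝ) ≤ (c:ℝ)^2 := by exact_mod_cast this
        nlinarith [sq_nonneg (e:ℝ)]
      · have : (1:ℤ) ≤ e^2 := by nlinarith [Int.one_le_abs h, sq_abs e]
        have h1R : (1:ℝ) ≤ (e:ℝ)^2 := by exact_mod_cast this
        nlinarith [sq_nonneg (c:ℝ)]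
    have haR : |(a:ℝ)| ≤ (2:ℝ)^l - 1 := by
      have : ((|a|:ℤ):ℝ) ≤ ((2^l - 1 : ℤ):ℝ) := by exact_mod_cast ha
      push_cast at this
      linarith
    have hbR : |(b:ℝ)| ≤ (2:ℝ)^l - 1 := by
      have : ((|b|:ℤ):ℝ) ≤ ((2^l - 1 : ℤ):ℝ) := by exact_mod_cast hb
      push_cast at this
      linarith
    have hkey := my_key z (a:ℝ) (b:ℝ) (c:ℝ) (e:ℝ) ((2:ℝ)^l) haR hbR
      (my_int_abs_le_sq c) (my_int_abs_le_sq e) hposR hz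
    have heq : (2*(a:ℂ) + 2*(b:ℂ)*Complex.I) + z * (2*(c:ℂ) + 2*(e:ℂ)*Complex.I)
        = 2 * ((↑((a:ℝ)) + ↑((b:ℝ)) * Complex.I) + z * (↑((c:ℝ)) + ↑((e:ℝ)) * Complex.I)) := by
      push_cast
      ring
    rw [heq, norm_mul]
    have h2 : ‖(2:ℂ)‖ = 2 := by norm_num
    rw [h2]
    calc min 2 (‖z‖ * 2) ≤ 2 := min_le_left _ _
      _ ≤ 2 * ‖(↑((a:ℝ)) + ↑((b:ℝ)) * Complex.I) + z * (↑((c:ℝ)) + ↑((e:ℝ)) * Complex.I)‖ := by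
          linarith
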